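/- Let f : ℝ^p → ℝ be differentiable and attain its minimum at a point β_∞. Suppose that for every anchor β̄ ∈ ℝ^p there is a differentiable surrogate g(· | β̄) with: (i) g(β | β̄) ≥ f(β) for all β, (ii) g(β̄ | β̄) = f(β̄) and ∇g(β̄ | β̄) = ∇f(β̄), and (iii) ‖∇g(γ | β̄) − ∇g(δ | β̄)‖ ≤ L‖γ − δ‖ for all γ, δ, β̄. If β_{k+1} is a global minimizer of g(· | β_k) for each k, then for every m, Σ_{k=0}^{m} ‖∇f(β_k)‖² ≤ 2L [f(β₀) − f(β_∞)]. Consequently lim_{m→∞} ‖∇f(β_m)‖ = 0. -/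

import Mathlib

open Real Filter

/-- Lipschitz-gradient descent lemma. -/
lemma descent_lemma {E : Type*} [NormedAddCommGroup E] [InnerProductSpace ℝ E] [CompleteSpace E]
    (h : E → ℝ) (hd : Differentiable ℝ h) {L : ℝ} (hL : 0 ≤ L)
    (hlip : ∀ a b, ‖gradient h a - gradient h b‖ ≤ L * ‖a - b‖) (x y : E) :
    h y ≤ h x + inner ℝ (gradient h x) (y - x) + L / 2 * ‖y - x‖ ^ 2 := by
  -- gradient is continuous
  have hgradcont : Continuous (fun z => gradient h z) := by
    apply LipschitzWith.continuous (K := ⟨L, hL⟩)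
    apply LipschitzWith.of_dist_le_mul
    intro a b
    rw [dist_eq_norm, dist_eq_norm]; exact hlip a b
  set v := y - x with hv
  set φ : ℝ → ℝ := fun t => h (x + t • v) with hφ
  set d : ℝ → ℝ := fun t => inner ℝ (gradient h (x + t • v)) v with hdd
  have hline : ∀ t : ℝ, HasDerivAt (fun s : ℝ => x + s • v) v t := by
    intro t
    simpa using ((hasDerivAt_id t).smul_const v).const_add x
  have hderiv : ∀ t : ℝ, HasDerivAt φ (d t) t := by
    intro t
    have h1 : HasGradientAt h (gradient h (x + t • v)) (x + t • v) :=
      (hd _).hasGradientAt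
    have h2 := h1.hasFDerivAt.comp_hasDerivAt t (hline t)
    have e : d t = (InnerProductSpace.toDual ℝ E (gradient h (x + t • v))) v := by
      simp [hdd, InnerProductSpace.toDual_apply_apply]
    rw [e]; exact h2
  have hdcont : Continuous d := by
    apply Continuous.inner
    · exact hgradcont.comp (by continuity)
    · exact continuous_const
  have hint : ∫ t in (0:ℝ)..1, d t = φ 1 - φ 0 :=
    intervalIntegral.integral_eq_sub_of_hasDerivAt
      (fun t _ => hderiv t) (hdcont.intervalIntegrable 0 1)
  have hbound : ∀ t ∈ Set.Icc (0:ℝ) 1, d t ≤ d 0 + L * t * ‖v‖ ^ 2 := by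
    intro t ht
    have h1 : d t - d 0 = inner ℝ (gradient h (x + t • v) - gradient h (x + (0:ℝ) • v)) v := by
      simp [hdd, inner_sub_left]
    have h2 : d t - d 0 ≤ ‖gradient h (x + t • v) - gradient h (x + (0:ℝ) • v)‖ * ‖v‖ := by
      rw [h1]; exact real_inner_le_norm _ _
    have h3 : ‖gradient h (x + t • v) - gradient h (x + (0:ℝ) • v)‖ ≤ L * (t * ‖v‖) := by
      have := hlip (x + t • v) (x + (0:ℝ) • v)
      have heq : ‖(x + t • v) - (x + (0:ℝ) • v)‖ = t * ‖v‖ := by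
        simp [norm_smul, abs_of_nonneg ht.1]
      rw [heq] at this; exact this
    nlinarith [norm_nonneg v, mul_le_mul_of_nonneg_right h3 (norm_nonneg v)]
  have hintle : ∫ t in (0:ℝ)..1, d t ≤ ∫ t in (0:ℝ)..1, (d 0 + L * t * ‖v‖ ^ 2) := by
    apply intervalIntegral.integral_mono_on zero_le_one
      (hdcont.intervalIntegrable 0 1) (by apply Continuous.intervalIntegrable; continuity)
    exact hbound
  have hrhs : ∫ t in (0:ℝ)..1, (d 0 + L * t * ‖v‖ ^ 2) = d 0 + L / 2 * ‖v‖ ^ 2 := by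
    rw [intervalIntegral.integral_add (by apply Continuous.intervalIntegrable; continuity)
      (by apply Continuous.intervalIntegrable; continuity)]
    have : ∫ t in (0:ℝ)..1, L * t * ‖v‖ ^ 2 = L / 2 * ‖v‖ ^ 2 := by
      have : (fun t : ℝ => L * t * ‖v‖ ^ 2) = fun t : ℝ => (L * ‖v‖ ^ 2) * t := by
        funext t; ring
      rw [this, intervalIntegral.integral_const_mul, integral_id]
      ring
    rw [this]; simp
  have hφ1 : φ 1 = h y := by simp [hφ, hv]
  have hφ0 : φ 0 = h x := by simp [hφ]
  have hd0 : d 0 = inner ℝ (gradient h x) v := by simp [hdd]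
  have final : φ 1 - φ 0 ≤ d 0 + L / 2 * ‖v‖ ^ 2 := by
    calc φ 1 - φ 0 = ∫ t in (0:ℝ)..1, d t := hint.symm
      _ ≤ ∫ t in (0:ℝ)..1, (d 0 + L * t * ‖v‖ ^ 2) := hintle
      _ = d 0 + L / 2 * ‖v‖ ^ 2 := hrhs
  rw [hφ1, hφ0, hd0] at final
  linarith

/-- Sublinear gradient bound for MM iterates: if `f` is differentiable with a
global minimum at `β∞`, each surrogate `g b̄` majorizes `f`, touches it in
value and gradient at its anchor, and has an `L`-Lipschitz gradient uniformly
in the anchor, and each iterate minimizes the current surrogate, then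
`Σ_{k=0}^m ‖∇f(β_k)‖² ≤ 2L [f(β₀) − f(β∞)]`, and `‖∇f(β_m)‖ → 0`. -/
theorem mm_gradient_sum_bound
    (p : ℕ) (L : ℝ) (hL : 0 < L)
    (f : EuclideanSpace ℝ (Fin p) → ℝ)
    (hdiff : Differentiable ℝ f)
    (βinf : EuclideanSpace ℝ (Fin p))
    (hmin : ∀ x, f βinf ≤ f x)
    (g : EuclideanSpace ℝ (Fin p) → EuclideanSpace ℝ (Fin p) → ℝ)
    (hgdiff : ∀ banchor, Differentiable ℝ (g banchor))
    (hmaj : ∀ banchor x, f x ≤ g banchor x)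
    (htan : ∀ banchor, g banchor banchor = f banchor)
    (htangrad : ∀ banchor, gradient (g banchor) banchor = gradient f banchor)
    (hlip : ∀ banchor γ δ,
      ‖gradient (g banchor) γ - gradient (g banchor) δ‖ ≤ L * ‖γ - δ‖)
    (β : ℕ → EuclideanSpace ℝ (Fin p))
    (hiter : ∀ k, ∀ x, g (β k) (β (k + 1)) ≤ g (β k) x) :
    (∀ m : ℕ, ∑ k ∈ Finset.range (m + 1), ‖gradient f (β k)‖ ^ 2 ≤
        2 * L * (f (β 0) - f βinf)) ∧
    Filter.Tendsto (fun m => ‖gradient f (β m)‖) Filter.atTop (nhds 0) := by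
  -- Key per-step inequality
  have key : ∀ k, ‖gradient f (β k)‖ ^ 2 ≤ 2 * L * (f (β k) - f (β (k + 1))) := by
    intro k
    set G := g (β k) with hG
    set v := gradient f (β k) with hvdef
    set z := β k - (1 / L) • v with hz
    have h1 : f (β (k + 1)) ≤ G (β (k + 1)) := hmaj _ _
    have h2 : G (β (k + 1)) ≤ G z := hiter k z
    have h3 : G z ≤ G (β k) + inner ℝ (gradient G (β k)) (z - β k) + L / 2 * ‖z - β k‖ ^ 2 :=
      descent_lemma G (hgdiff _) hL.le (hlip _) _ _
    have hgb : gradient G (β k) = v := htangrad (β k)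
    have hzz : z - β k = -((1 / L) • v) := by rw [hz]; abel
    have hinner : inner ℝ (gradient G (β k)) (z - β k) = -(1 / L) * ‖v‖ ^ 2 := by
      rw [hgb, hzz, inner_neg_right, real_inner_smul_right, real_inner_self_eq_norm_sq]
      ring
    have hnorm : ‖z - β k‖ ^ 2 = (1 / L) ^ 2 * ‖v‖ ^ 2 := by
      rw [hzz, norm_neg, norm_smul, mul_pow, Real.norm_eq_abs,
        abs_of_pos (by positivity : (0:ℝ) < 1 / L)]
    have htan' : G (β k) = f (β k) := htan (β k)
    have h4 : G z ≤ f (β k) - 1 / (2 * L) * ‖v‖ ^ 2 := by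
      rw [hinner, hnorm, htan'] at h3
      have heq : L / 2 * ((1 / L) ^ 2 * ‖v‖ ^ 2) = 1 / (2 * L) * ‖v‖ ^ 2 := by
        field_simp
      have heq2 : -(1 / L) * ‖v‖ ^ 2 + 1 / (2 * L) * ‖v‖ ^ 2 = -(1 / (2 * L) * ‖v‖ ^ 2) := by
        field_simp; ring
      linarith
    have h5 : f (β (k + 1)) ≤ f (β k) - 1 / (2 * L) * ‖v‖ ^ 2 :=
      le_trans h1 (le_trans h2 h4)
    have hLpos : (0:ℝ) < 2 * L := by linarith
    have hmul : 2 * L * (1 / (2 * L) * ‖v‖ ^ 2) = ‖v‖ ^ 2 := by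
      field_simp
    show ‖v‖ ^ 2 ≤ 2 * L * (f (β k) - f (β (k + 1)))
    nlinarith [h5, hLpos, hmul]
  have hsum : ∀ m : ℕ, ∑ k ∈ Finset.range (m + 1), ‖gradient f (β k)‖ ^ 2 ≤
      2 * L * (f (β 0) - f βinf) := by
    intro m
    have htel : ∑ k ∈ Finset.range (m + 1), (f (β k) - f (β (k + 1))) =
        f (β 0) - f (β (m + 1)) := by
      rw [← Finset.sum_range_sub' (fun k => f (β k))]
    calc ∑ k ∈ Finset.range (m + 1), ‖gradient f (β k)‖ ^ 2
        ≤ ∑ k ∈ Finset.range (m + 1), 2 * L * (f (β k) - f (β (k + 1))) :=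
          Finset.sum_le_sum (fun k _ => key k)
      _ = 2 * L * (f (β 0) - f (β (m + 1))) := by rw [← Finset.mul_sum, htel]
      _ ≤ 2 * L * (f (β 0) - f βinf) := by
          have := hmin (β (m + 1))
          nlinarith
  refine ⟨hsum, ?_⟩
  have hsummable : Summable (fun k => ‖gradient f (β k)‖ ^ 2) := by
    apply summable_of_sum_range_le (c := 2 * L * (f (β 0) - f βinf))
      (fun k => by positivity)
    intro n
    cases n with
    | zero => simp; nlinarith [hmin (β 0)]
    | succ m => exact hsum m
  have hsq : Filter.Tendsto (fun m => ‖gradient f (β m)‖ ^ 2) Filter.atTop (nhds 0) :=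
    hsummable.tendsto_atTop_zero
  have := hsq.sqrt
  rw [Real.sqrt_zero] at this
  convert this using 2 with m
  rw [Real.sqrt_sq (norm_nonneg _)]
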